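/- For supersonic states (u₁² + u₂² > c², u₁ > c > 0, ρ > 0), the vectors r₁ = (−λ₁/(ρu₁) − u₂/u₁, 1, λ₁)ᵀ and r₂ = (−λ₂/(ρu₁) − u₂/u₁, 1, λ₂)ᵀ satisfy (B − λᵢ A) rᵢ = 0 for i = 1, 2, where λ_{1,2} = (ρu₁c²/(u₁²−c²))(u₂/u₁ ∓ √(u₁²+u₂²−c²)/c), and A, B are the coefficient matrices of the Lagrangian rotating Euler system. -/

import Mathlib

lemma pencil_aux (ρ c u₁ u₂ lam : ℝ) (hρ' : ρ ≠ 0) (hc' : c ≠ 0) (hu1 : u₁ ≠ 0)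
    (hq : (u₁ ^ 2 - c ^ 2) * lam ^ 2 - 2 * ρ * c ^ 2 * u₂ * lam
        - ρ ^ 2 * c ^ 2 * (u₁ ^ 2 + u₂ ^ 2) = 0) :
    (!![(0 : ℝ), 0, -u₂ / u₁; 0, 0, 1; -u₂ / u₁, 1, 0]
      - lam • !![(1 : ℝ), 0, 1 / (ρ * u₁); 0, 1, 0; 1 / (ρ * u₁), 0, 1 / (ρ ^ 2 * c ^ 2)]).mulVec
      ![-lam / (ρ * u₁) - u₂ / u₁, 1, lam] = 0 := by
  funext i
  fin_cases i <;>
    simp [Matrix.mulVec, dotProduct, Fin.sum_univ_three] <;>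
    field_simp <;>
    ring_nf <;>
    linear_combination (-1) * hq

lemma quad_aux (ρ c u₁ u₂ s : ℝ) (hc' : c ≠ 0) (hu1 : u₁ ≠ 0)
    (hd : u₁ ^ 2 - c ^ 2 ≠ 0) (hs2 : s ^ 2 = u₁ ^ 2 + u₂ ^ 2 - c ^ 2) (e : ℝ)
    (he : e = 1 ∨ e = -1) :
    (u₁ ^ 2 - c ^ 2) * (ρ * u₁ * c ^ 2 / (u₁ ^ 2 - c ^ 2) * (u₂ / u₁ + e * (s / c))) ^ 2
      - 2 * ρ * c ^ 2 * u₂ * (ρ * u₁ * c ^ 2 / (u₁ ^ 2 - c ^ 2) * (u₂ / u₁ + e * (s / c)))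
      - ρ ^ 2 * c ^ 2 * (u₁ ^ 2 + u₂ ^ 2) = 0 := by
  have he2 : e ^ 2 = 1 := by rcases he with rfl | rfl <;> norm_num
  field_simp
  ring_nf
  linear_combination (c ^ 2 * ρ ^ 2 * u₁ ^ 2) * (s ^ 2 * he2 + hs2)

/-- For supersonic states, the vectors rᵢ = (−λᵢ/(ρu₁) − u₂/u₁, 1, λᵢ)ᵀ are right
eigenvectors of the pencil: (B − λᵢA) rᵢ = 0, i = 1,2, where
λ_{1,2} = (ρu₁c²/(u₁²−c²))(u₂/u₁ ∓ √(u₁²+u₂²−c²)/c). -/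
theorem right_eigenvectors_pencil
    (ρ c u₁ u₂ : ℝ) (hρ : 0 < ρ) (hc : 0 < c) (hu₁ : c < u₁)
    (hsup : c ^ 2 < u₁ ^ 2 + u₂ ^ 2) :
    let A : Matrix (Fin 3) (Fin 3) ℝ :=
      !![(1 : ℝ), 0, 1 / (ρ * u₁); 0, 1, 0; 1 / (ρ * u₁), 0, 1 / (ρ ^ 2 * c ^ 2)]
    let B : Matrix (Fin 3) (Fin 3) ℝ :=
      !![(0 : ℝ), 0, -u₂ / u₁; 0, 0, 1; -u₂ / u₁, 1, 0]
    let lam₁ : ℝ := ρ * u₁ * c ^ 2 / (u₁ ^ 2 - c ^ 2)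
      * (u₂ / u₁ - Real.sqrt (u₁ ^ 2 + u₂ ^ 2 - c ^ 2) / c)
    let lam₂ : ℝ := ρ * u₁ * c ^ 2 / (u₁ ^ 2 - c ^ 2)
      * (u₂ / u₁ + Real.sqrt (u₁ ^ 2 + u₂ ^ 2 - c ^ 2) / c)
    (B - lam₁ • A).mulVec ![-lam₁ / (ρ * u₁) - u₂ / u₁, 1, lam₁] = 0 ∧
    (B - lam₂ • A).mulVec ![-lam₂ / (ρ * u₁) - u₂ / u₁, 1, lam₂] = 0 := by
  intro A B lam₁ lam₂
  have hρ' : ρ ≠ 0 := ne_of_gt hρ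
  have hc' : c ≠ 0 := ne_of_gt hc
  have hu1 : u₁ ≠ 0 := ne_of_gt (lt_trans hc hu₁)
  have hd : u₁ ^ 2 - c ^ 2 ≠ 0 := by nlinarith
  have hs2 : Real.sqrt (u₁ ^ 2 + u₂ ^ 2 - c ^ 2) ^ 2 = u₁ ^ 2 + u₂ ^ 2 - c ^ 2 :=
    Real.sq_sqrt (by nlinarith)
  have h1 := quad_aux ρ c u₁ u₂ _ hc' hu1 hd hs2 (-1) (Or.inr rfl)
  have h2 := quad_aux ρ c u₁ u₂ _ hc' hu1 hd hs2 1 (Or.inl rfl)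
  refine ⟨pencil_aux ρ c u₁ u₂ lam₁ hρ' hc' hu1 ?_, pencil_aux ρ c u₁ u₂ lam₂ hρ' hc' hu1 ?_⟩
  · show (u₁ ^ 2 - c ^ 2) * (ρ * u₁ * c ^ 2 / (u₁ ^ 2 - c ^ 2)
        * (u₂ / u₁ - Real.sqrt (u₁ ^ 2 + u₂ ^ 2 - c ^ 2) / c)) ^ 2
      - 2 * ρ * c ^ 2 * u₂ * (ρ * u₁ * c ^ 2 / (u₁ ^ 2 - c ^ 2)
        * (u₂ / u₁ - Real.sqrt (u₁ ^ 2 + u₂ ^ 2 - c ^ 2) / c))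
      - ρ ^ 2 * c ^ 2 * (u₁ ^ 2 + u₂ ^ 2) = 0
    linear_combination h1
  · show (u₁ ^ 2 - c ^ 2) * (ρ * u₁ * c ^ 2 / (u₁ ^ 2 - c ^ 2)
        * (u₂ / u₁ + Real.sqrt (u₁ ^ 2 + u₂ ^ 2 - c ^ 2) / c)) ^ 2
      - 2 * ρ * c ^ 2 * u₂ * (ρ * u₁ * c ^ 2 / (u₁ ^ 2 - c ^ 2)
        * (u₂ / u₁ + Real.sqrt (u₁ ^ 2 + u₂ ^ 2 - c ^ 2) / c))
      - ρ ^ 2 * c ^ 2 * (u₁ ^ 2 + u₂ ^ 2) = 0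
    linear_combination h2
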